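/- In the two-period framework, assume that for all n, ℓ̂_P^n/E_n + 1/2 ≥ ℓ̂_P/E, and let α ∈ (0,1]. If ℓ is the Nash equilibrium of the daily-proportional game G^DP_α, then the social cost at equilibrium equals SC^DP_α = Σ_n f_n^α(ℓ) = (1−α)·[ E²/2 + (D²/2)·( α² + V_E·(1−α)·α ) ], where D = ℓ̂_P − ℓ̂_O and V_E = Σ_n E_n²/E². -/

import Mathlib

/-- Auxiliary: sign of the derivative-like coefficient at a constrained
minimizer of a convex quadratic on `[0, c]`. -/
lemma quad_sign_aux (A t c x : ℝ) (hA : 0 < A) (hx0 : 0 ≤ x) (hxc : x ≤ c)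
    (key : ∀ z, 0 ≤ z → z ≤ c → 0 ≤ A * (z - x) ^ 2 + t * (z - x)) :
    (x < c → 0 ≤ t) ∧ (0 < x → t ≤ 0) := by
  constructor
  · intro hxlt
    by_contra ht
    push_neg at ht
    set u : ℝ := min (c - x) (-t / (2 * A)) with hu
    have hu1 : u ≤ c - x := min_le_left _ _
    have hu2 : u ≤ -t / (2 * A) := min_le_right _ _
    have hupos : 0 < u := lt_min (by linarith) (div_pos (by linarith) (by linarith))
    have h := key (x + u) (by linarith) (by linarith)
    have hAu : A * u ≤ -t / 2 := by
      have := mul_le_mul_of_nonneg_left hu2 hA.le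
      have h2 : A * (-t / (2 * A)) = -t / 2 := by field_simp
      linarith [h2 ▸ this]
    nlinarith [mul_pos hupos hupos]
  · intro hxpos
    by_contra ht
    push_neg at ht
    set u : ℝ := min x (t / (2 * A)) with hu
    have hu1 : u ≤ x := min_le_left _ _
    have hu2 : u ≤ t / (2 * A) := min_le_right _ _
    have hupos : 0 < u := lt_min hxpos (div_pos (by linarith) (by linarith))
    have h := key (x - u) (by linarith) (by linarith)
    have hAu : A * u ≤ t / 2 := by
      have := mul_le_mul_of_nonneg_left hu2 hA.le
      have h2 : A * (t / (2 * A)) = t / 2 := by field_simp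
      linarith [h2 ▸ this]
    nlinarith [mul_pos hupos hupos]

lemma aux_h4 (a q d p P : ℝ) (ha : a ≠ 0) :
    (2*(1-a)*q*d + 4*a*(p - P)) / (4*a) = p - (P - (1-a)*q*d/(2*a)) := by
  field_simp
  ring

set_option maxHeartbeats 1000000

/-- In the two-period framework, the social cost at the Nash
equilibrium of the daily-proportional game `G^DP_α` (α ∈ (0,1]) equals
`(1−α)[E²/2 + (D²/2)(α² + V_E (1−α) α)]` with `D = ℓ̂_P − ℓ̂_O` and
`V_E = Σ_n E_n²/E²`. -/
theorem dp_two_period_social_cost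
    (N : ℕ)
    (En : Fin N → ℝ) (hEn : ∀ n, 0 < En n)
    (lhP lhO : Fin N → ℝ)
    (hlhP : ∀ n, 0 ≤ lhP n) (hlhO : ∀ n, 0 ≤ lhO n)
    (hlhsum : ∀ n, lhP n + lhO n = En n)
    (E LhP LhO : ℝ)
    (hE : E = ∑ n, En n) (hLhP : LhP = ∑ n, lhP n) (hLhO : LhO = ∑ n, lhO n)
    (hpeak : LhO ≤ E / 2 ∧ E / 2 ≤ LhP)
    (hassum : ∀ n, lhP n / En n + 1 / 2 ≥ LhP / E)
    (α : ℝ) (hα : α ∈ Set.Ioc (0 : ℝ) 1)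
    (D VE : ℝ) (hD : D = LhP - LhO) (hVE : VE = ∑ n, (En n) ^ 2 / E ^ 2)
    (f : Fin N → (Fin N → ℝ) → (Fin N → ℝ) → ℝ)
    (hf : ∀ n lP lO, f n lP lO =
      (1 - α) * (En n / E) * ((∑ m, lP m) ^ 2 + (∑ m, lO m) ^ 2)
        + α * ((lP n - lhP n) ^ 2 + (lO n - lhO n) ^ 2))
    (lP lO : Fin N → ℝ)
    (hfeas : ∀ n, lP n + lO n = En n ∧ 0 ≤ lP n ∧ 0 ≤ lO n)
    (hNE : ∀ n xP xO, xP + xO = En n → 0 ≤ xP → 0 ≤ xO →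
      f n lP lO ≤ f n (Function.update lP n xP) (Function.update lO n xO)) :
    (∑ n, f n lP lO)
      = (1 - α) * (E ^ 2 / 2 + (D ^ 2 / 2) * (α ^ 2 + VE * (1 - α) * α)) := by
  obtain ⟨hα0, hα1⟩ := hα
  have h1α : (0:ℝ) ≤ 1 - α := by linarith
  -- trivial case N = 0
  rcases Nat.eq_zero_or_pos N with hN | hN
  · subst hN
    have hE0 : E = 0 := by rw [hE]; simp
    have hD0 : D = 0 := by rw [hD, hLhP, hLhO]; simp
    simp [hE0, hD0]
  -- main case
  have hEpos : 0 < E := by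
    rw [hE]
    exact Finset.sum_pos (fun n _ => hEn n)
      (Finset.univ_nonempty_iff.mpr (Fin.pos_iff_nonempty.mp hN))
  have hEne : E ≠ 0 := ne_of_gt hEpos
  have hLsum : LhP + LhO = E := by
    rw [hLhP, hLhO, hE, ← Finset.sum_add_distrib]
    exact Finset.sum_congr rfl (fun n _ => hlhsum n)
  have hDnn : 0 ≤ D := by rw [hD]; linarith [hpeak.1, hpeak.2]
  obtain ⟨SP, hSP⟩ : ∃ x : ℝ, x = ∑ n, lP n := ⟨_, rfl⟩
  obtain ⟨SO, hSO⟩ : ∃ x : ℝ, x = ∑ n, lO n := ⟨_, rfl⟩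
  obtain ⟨d, hd⟩ : ∃ x : ℝ, x = SP - SO := ⟨_, rfl⟩
  have hSsum : SP + SO = E := by
    rw [hSP, hSO, ← Finset.sum_add_distrib, hE]
    exact Finset.sum_congr rfl (fun n _ => (hfeas n).1)
  -- lower bound on preferred peak loads
  have hp_lb : ∀ n, En n * (D / (2 * E)) ≤ lhP n := by
    intro n
    have h1 : D / (2 * E) = LhP / E - 1 / 2 := by
      rw [hD]; field_simp; linear_combination (-1) * hLsum
    have h3 : D / (2 * E) ≤ lhP n / En n := by rw [h1]; linarith [hassum n]
    calc En n * (D / (2 * E)) ≤ En n * (lhP n / En n) :=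
          mul_le_mul_of_nonneg_left h3 (hEn n).le
      _ = lhP n := by rw [mul_comm, div_mul_cancel₀ _ (ne_of_gt (hEn n))]
  have hp_ub : ∀ n, lhP n ≤ En n := fun n => by linarith [hlhO n, hlhsum n]
  -- the claimed equilibrium profile
  have hy_lb : ∀ n, 0 ≤ lhP n - (1 - α) * (En n / E) * D / 2 := by
    intro n
    have h1 := hp_lb n
    have h2 : (1 - α) * (En n / E) * D / 2 ≤ En n * (D / (2 * E)) := by
      rw [div_le_iff₀ (by norm_num : (0:ℝ) < 2)]
      have h3 : En n * (D / (2 * E)) * 2 = (En n / E) * D := by field_simp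
      rw [h3]
      nlinarith [mul_nonneg (div_nonneg (hEn n).le hEpos.le) hDnn]
    linarith
  have hy_ub : ∀ n, lhP n - (1 - α) * (En n / E) * D / 2 ≤ En n := by
    intro n
    have : 0 ≤ (1 - α) * (En n / E) * D / 2 := by
      have := (hEn n).le
      positivity
    linarith [hp_ub n]
  -- key variational inequality from the Nash property
  have key : ∀ n x, 0 ≤ x → x ≤ En n →
      0 ≤ (2*(1-α)*(En n/E) + 2*α) * (x - lP n)^2
          + (2*(1-α)*(En n/E)*d + 4*α*(lP n - lhP n)) * (x - lP n) := by
    intro n x hx0 hx1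
    have hupd : ∀ (g : Fin N → ℝ) (z : ℝ),
        ∑ m, Function.update g n z m = ∑ m, g m - g n + z := by
      intro g z
      rw [Finset.sum_update_of_mem (Finset.mem_univ n),
        Finset.sum_sdiff_eq_sub (Finset.subset_univ {n})]
      simp; ring
    have h := hNE n x (En n - x) (by ring) hx0 (by linarith)
    rw [hf, hf, hupd lP x, hupd lO (En n - x), Function.update_self,
      Function.update_self] at h
    have hlOn : lO n = En n - lP n := by linarith [(hfeas n).1]
    have hlhOn : lhO n = En n - lhP n := by linarith [hlhsum n]
    rw [hlOn, hlhOn, ← hSP, ← hSO] at h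
    rw [hd]
    nlinarith [h]
  -- sign conditions
  have hApos : ∀ n, 0 < 2*(1-α)*(En n/E) + 2*α := by
    intro n
    have : 0 ≤ (1-α)*(En n/E) := by
      have := (hEn n).le
      positivity
    linarith
  have hsign : ∀ n,
      (lP n < En n → 0 ≤ 2*(1-α)*(En n/E)*d + 4*α*(lP n - lhP n)) ∧
      (0 < lP n → 2*(1-α)*(En n/E)*d + 4*α*(lP n - lhP n) ≤ 0) := by
    intro n
    exact quad_sign_aux _ _ _ _ (hApos n) (hfeas n).2.1
      (by linarith [(hfeas n).1, (hfeas n).2.2]) (key n)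
  -- directional comparison lemmas
  have hdir1 : α * D ≤ d → ∀ n, lP n ≤ lhP n - (1 - α) * (En n / E) * D / 2 := by
    intro hdge n
    by_contra hcon
    push_neg at hcon
    have hpos : 0 < lP n := lt_of_le_of_lt (hy_lb n) hcon
    have ht := (hsign n).2 hpos
    -- t ≤ 0 gives lP n ≤ c n
    have hcn : lP n ≤ lhP n - (1 - α) * (En n / E) * d / (2 * α) := by
      have h4 := aux_h4 α (En n/E) d (lP n) (lhP n) (ne_of_gt hα0)
      have h5 : (2*(1-α)*(En n/E)*d + 4*α*(lP n - lhP n)) / (4*α) ≤ 0 :=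
        div_nonpos_of_nonpos_of_nonneg ht (by positivity)
      linarith [h4 ▸ h5]
    -- c n ≤ y n
    have hcy : lhP n - (1 - α) * (En n / E) * d / (2 * α)
        ≤ lhP n - (1 - α) * (En n / E) * D / 2 := by
      have h6 : (1 - α) * (En n / E) * D / 2 ≤ (1 - α) * (En n / E) * d / (2 * α) := by
        rw [div_le_div_iff₀ (by norm_num) (by positivity)]
        have h7 : 0 ≤ (1 - α) * (En n / E) := by
          have := (hEn n).le; positivity
        nlinarith [mul_nonneg h7 (sub_nonneg.mpr hdge)]
      linarith
    linarith
  have hdir2 : d ≤ α * D → ∀ n, lhP n - (1 - α) * (En n / E) * D / 2 ≤ lP n := by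
    intro hdle n
    by_contra hcon
    push_neg at hcon
    have hlt : lP n < En n := lt_of_lt_of_le hcon (hy_ub n)
    have ht := (hsign n).1 hlt
    have hcn : lhP n - (1 - α) * (En n / E) * d / (2 * α) ≤ lP n := by
      have h4 := aux_h4 α (En n/E) d (lP n) (lhP n) (ne_of_gt hα0)
      have h5 : 0 ≤ (2*(1-α)*(En n/E)*d + 4*α*(lP n - lhP n)) / (4*α) :=
        div_nonneg ht (by positivity)
      linarith [h4 ▸ h5]
    have hcy : lhP n - (1 - α) * (En n / E) * D / 2
        ≤ lhP n - (1 - α) * (En n / E) * d / (2 * α) := by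
      have h6 : (1 - α) * (En n / E) * d / (2 * α) ≤ (1 - α) * (En n / E) * D / 2 := by
        rw [div_le_div_iff₀ (by positivity) (by norm_num)]
        have h7 : 0 ≤ (1 - α) * (En n / E) := by
          have := (hEn n).le; positivity
        nlinarith [mul_nonneg h7 (sub_nonneg.mpr hdle)]
      linarith
    linarith
  -- the sum of the claimed profile
  have hsumy : ∑ n, (lhP n - (1 - α) * (En n / E) * D / 2) = LhP - (1 - α) * D / 2 := by
    rw [Finset.sum_sub_distrib, ← hLhP]
    have h8 : ∑ n, (1 - α) * (En n / E) * D / 2 = ((1 - α) * D / (2 * E)) * ∑ n, En n := by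
      rw [Finset.mul_sum]
      exact Finset.sum_congr rfl (fun n _ => by field_simp)
    rw [h8, ← hE]
    field_simp
  have hLhPv : LhP = (E + D) / 2 := by rw [hD] at *; linarith
  -- conclude d = α D
  have hdD : d = α * D := by
    rcases le_total (α * D) d with hcase | hcase
    · have hle : SP ≤ LhP - (1 - α) * D / 2 := by
        rw [← hsumy, hSP]
        exact Finset.sum_le_sum (fun n _ => hdir1 hcase n)
      have : d ≤ α * D := by
        rw [hd] at *
        rw [hLhPv] at hle
        linarith
      linarith
    · have hge : LhP - (1 - α) * D / 2 ≤ SP := by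
        rw [← hsumy, hSP]
        exact Finset.sum_le_sum (fun n _ => hdir2 hcase n)
      have : α * D ≤ d := by
        rw [hd] at *
        rw [hLhPv] at hge
        linarith
      linarith
  -- each consumer's equilibrium load
  have hlPeq : ∀ n, lP n = lhP n - (1 - α) * (En n / E) * D / 2 :=
    fun n => le_antisymm (hdir1 (le_of_eq hdD.symm) n) (hdir2 (le_of_eq hdD) n)
  -- values of the aggregate loads
  have hSPv : SP = (E + α * D) / 2 := by
    have : SP - SO = α * D := hd ▸ hdD
    linarith
  have hSOv : SO = (E - α * D) / 2 := by linarith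
  -- final computation
  have hterm : ∀ n, f n lP lO
      = ((1 - α) * (SP^2 + SO^2) / E) * En n
        + (α * (1 - α)^2 * (D^2 / 2)) * (En n ^ 2 / E ^ 2) := by
    intro n
    rw [hf]
    have hlOn : lO n = En n - lP n := by linarith [(hfeas n).1]
    have hlhOn : lhO n = En n - lhP n := by linarith [hlhsum n]
    rw [hlOn, hlhOn, hlPeq n, ← hSP, ← hSO]
    ring
  rw [Finset.sum_congr rfl (fun n _ => hterm n), Finset.sum_add_distrib,
    ← Finset.mul_sum, ← Finset.mul_sum, ← hE, ← hVE, hSPv, hSOv,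
    div_mul_cancel₀ _ hEne]
  ring
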